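/- Let N = c·n with c, n positive integers, and let x_1,…,x_N be points in ℝ^d. Then there exist pairwise disjoint subsets C_1,…,C_n of {1,…,N} whose union is {1,…,N}, with Card(C_k) = c for every k, and such that for every k = 1,…,n, Diam({x_i : i ∈ C_k}) ≤ 4r·k^{-1/d}, where r = max_{1≤i≤N} ‖x_i‖. -/

import Mathlib

open MeasureTheory Metric

theorem uc_cell (j : ℕ) (hj : 1 ≤ j) (a b : ℝ) (ha0 : 0 ≤ a) (haj : a ≤ j)
    (hb0 : 0 ≤ b) (hbj : b ≤ j)
    (h : min (j - 1) ⌊a⌋₊ = min (j - 1) ⌊b⌋₊) : |a - b| ≤ 1 := by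
  set k := min (j - 1) ⌊a⌋₊ with hk
  have bound : ∀ y : ℝ, 0 ≤ y → y ≤ j → min (j-1) ⌊y⌋₊ = k → (k : ℝ) ≤ y ∧ y ≤ k + 1 := by
    intro y hy0 hyj hmin
    have h1 : k ≤ ⌊y⌋₊ := by omega
    have hle : (k : ℝ) ≤ y := le_trans (by exact_mod_cast h1) (Nat.floor_le hy0)
    rcases Nat.lt_or_ge k (j - 1) with hlt | hge
    · have hfy : ⌊y⌋₊ = k := by omega
      have := Nat.lt_floor_add_one y
      rw [hfy] at this
      exact ⟨hle, by linarith⟩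
    · have hkj : (k : ℝ) + 1 = j := by
        have : k + 1 = j := by omega
        exact_mod_cast this
      exact ⟨hle, by rw [hkj]; exact hyj⟩
  have hA := bound a ha0 haj rfl
  have hB := bound b hb0 hbj h.symm
  rw [abs_sub_le_iff]
  constructor <;> linarith [hA.1, hA.2, hB.1, hB.2]

theorem uc_exists_j (d m : ℕ) (hd : 1 ≤ d) (hm : 1 ≤ m) :
    ∃ j : ℕ, 1 ≤ j ∧ j ^ d ≤ m ∧ m ≤ (2 * j) ^ d := by
  have hne : ((Finset.range (m+1)).filter (fun j => j ^ d ≤ m)).Nonempty := by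
    refine ⟨1, ?_⟩
    simp only [Finset.mem_filter, Finset.mem_range, one_pow]
    omega
  set F := (Finset.range (m+1)).filter (fun j => j ^ d ≤ m)
  have h1 : 1 ∈ F := by simp only [F, Finset.mem_filter, Finset.mem_range, one_pow]; omega
  refine ⟨F.max' hne, Finset.le_max' F 1 h1, ?_, ?_⟩
  · have := F.max'_mem hne
    simpa [F] using (Finset.mem_filter.mp this).2
  · set j := F.max' hne with hj
    have hj1 : 1 ≤ j := Finset.le_max' F 1 h1
    have hnot : ¬ (j + 1) ^ d ≤ m := by
      intro h
      have hmem : j + 1 ∈ F := by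
        simp only [F, Finset.mem_filter, Finset.mem_range]
        exact ⟨by have := Nat.le_self_pow (show d ≠ 0 by omega) (j+1); omega, h⟩
      have := Finset.le_max' F (j+1) hmem
      omega
    calc m ≤ (j+1)^d := by omega
      _ ≤ (2*j)^d := Nat.pow_le_pow_left (by omega) d

theorem uc_extract (d N c m : ℕ) (hd : 1 ≤ d) (hc : 1 ≤ c) (hm : 1 ≤ m)
    (x : Fin N → Fin d → ℝ) (r : ℝ) (hr0 : 0 ≤ r) (hxr : ∀ i, ‖x i‖ ≤ r)
    (S : Finset (Fin N)) (hS : c * m ≤ S.card) :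
    ∃ T : Finset (Fin N), T ⊆ S ∧ T.card = c ∧
      ∀ i ∈ T, ∀ i' ∈ T, dist (x i) (x i') ≤ 4 * r * (m : ℝ) ^ (-(1:ℝ)/d) := by
  have hSc : c ≤ S.card := le_trans (Nat.le_mul_of_pos_right c (by omega)) hS
  have hrhs : 0 ≤ 4 * r * (m : ℝ) ^ (-(1:ℝ)/d) := by positivity
  rcases eq_or_lt_of_le hr0 with hr | hr
  · -- r = 0 : all points are 0
    obtain ⟨T, hTS, hTc⟩ := Finset.exists_subset_card_eq hSc
    refine ⟨T, hTS, hTc, fun i _ i' _ => ?_⟩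
    have h1 : x i = 0 := by
      have := hxr i; rw [← hr] at this
      exact norm_le_zero_iff.mp this
    have h2 : x i' = 0 := by
      have := hxr i'; rw [← hr] at this
      exact norm_le_zero_iff.mp this
    rw [h1, h2, dist_self]; exact hrhs
  · obtain ⟨j, hj1, hjm, hmj⟩ := uc_exists_j d m hd hm
    set g : Fin N → (Fin d → ℕ) := fun i t => min (j - 1) ⌊(x i t + r) * j / (2*r)⌋₊ with hg
    set B : Finset (Fin d → ℕ) := Fintype.piFinset (fun _ => Finset.range j) with hB
    have hmaps : ∀ i ∈ S, g i ∈ B := by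
      intro i _
      simp only [B, Fintype.mem_piFinset, Finset.mem_range]
      intro t
      simp only [g]
      omega
    have hBcard : B.card = j ^ d := by
      simp [B, Fintype.card_piFinset]
    have hpig : ∃ y ∈ B, c ≤ (S.filter (fun i => g i = y)).card := by
      apply Finset.exists_le_card_fiber_of_mul_le_card_of_maps_to hmaps
      · exact ⟨fun _ => 0, by simp [B, Fintype.mem_piFinset]; omega⟩
      · rw [hBcard]
        calc j ^ d * c ≤ m * c := Nat.mul_le_mul_right c hjm
          _ = c * m := Nat.mul_comm m c
          _ ≤ S.card := hS
    obtain ⟨y, _, hy⟩ := hpig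
    obtain ⟨T, hTsub, hTc⟩ := Finset.exists_subset_card_eq hy
    refine ⟨T, hTsub.trans (Finset.filter_subset _ _), hTc, ?_⟩
    -- all points of T lie in the same cell
    have hcoord : ∀ i ∈ T, ∀ i' ∈ T, ∀ t : Fin d, |x i t - x i' t| ≤ 2 * r / j := by
      intro i hi i' hi' t
      have hgi : g i = y := (Finset.mem_filter.mp (hTsub hi)).2
      have hgi' : g i' = y := (Finset.mem_filter.mp (hTsub hi')).2
      have hbnd : ∀ i'' : Fin N, |x i'' t| ≤ r := by
        intro i''
        calc |x i'' t| = ‖x i'' t‖ := (Real.norm_eq_abs _).symm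
          _ ≤ ‖x i''‖ := norm_le_pi_norm (x i'') t
          _ ≤ r := hxr i''
      have hcell := uc_cell j hj1 ((x i t + r) * j / (2*r)) ((x i' t + r) * j / (2*r))
        (by
          have h0 := (abs_le.mp (hbnd i)).1
          exact div_nonneg (mul_nonneg (by linarith) (by positivity)) (by linarith))
        (by
          have h1 := (abs_le.mp (hbnd i)).2
          rw [div_le_iff₀ (by positivity)]
          have : (x i t + r) ≤ 2 * r := by linarith
          calc (x i t + r) * j ≤ 2 * r * j := by
                apply mul_le_mul_of_nonneg_right this (by positivity)
            _ = (j : ℝ) * (2 * r) := by ring)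
        (by
          have h0 := (abs_le.mp (hbnd i')).1
          exact div_nonneg (mul_nonneg (by linarith) (by positivity)) (by linarith))
        (by
          have h1 := (abs_le.mp (hbnd i')).2
          rw [div_le_iff₀ (by positivity)]
          calc (x i' t + r) * j ≤ 2 * r * j := by
                apply mul_le_mul_of_nonneg_right (by linarith) (by positivity)
            _ = (j : ℝ) * (2 * r) := by ring)
        (by
          have e1 : g i t = g i' t := by rw [hgi, hgi']
          simpa [g] using e1)
      have hexp : (x i t + r) * j / (2*r) - (x i' t + r) * j / (2*r)
          = (x i t - x i' t) * j / (2*r) := by ring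
      rw [hexp] at hcell
      rw [abs_div, abs_mul] at hcell
      have hj0 : (0:ℝ) < j := by exact_mod_cast hj1
      have h2r : |(2:ℝ)*r| = 2*r := abs_of_pos (by linarith)
      have hjabs : |(j:ℝ)| = j := abs_of_pos hj0
      rw [h2r, hjabs, div_le_one (by linarith)] at hcell
      rw [le_div_iff₀ hj0]
      exact hcell
    intro i hi i' hi'
    have hd1 : dist (x i) (x i') ≤ 2 * r / j := by
      rw [dist_pi_le_iff (by positivity)]
      intro t
      rw [Real.dist_eq]
      exact hcoord i hi i' hi' t
    refine le_trans hd1 ?_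
    -- 2r/j ≤ 4r m^{-1/d}
    have hj0 : (0:ℝ) < j := by exact_mod_cast hj1
    have hm0 : (0:ℝ) < m := by exact_mod_cast hm
    have hmpow : (m:ℝ) ^ ((1:ℝ)/d) ≤ 2 * j := by
      have h1 : (m:ℝ) ≤ ((2*j : ℕ) : ℝ) ^ (d:ℕ) := by exact_mod_cast hmj
      have h2 : (m:ℝ) ^ ((1:ℝ)/d) ≤ (((2*j:ℕ):ℝ) ^ (d:ℕ)) ^ ((1:ℝ)/d) := by
        apply Real.rpow_le_rpow (le_of_lt hm0) h1 (by positivity)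
      have h3 : (((2*j:ℕ):ℝ) ^ (d:ℕ)) ^ ((1:ℝ)/d) = ((2*j:ℕ):ℝ) := by
        rw [← Real.rpow_natCast ((2*j:ℕ):ℝ) d, ← Real.rpow_mul (by positivity)]
        rw [mul_one_div, div_self (by exact_mod_cast (by omega : d ≠ 0) : (d:ℝ) ≠ 0), Real.rpow_one]
      rw [h3] at h2
      push_cast at h2
      exact h2
    have hpowpos : (0:ℝ) < (m:ℝ) ^ ((1:ℝ)/d) := Real.rpow_pos_of_pos hm0 _
    have hneg : (m:ℝ) ^ (-(1:ℝ)/d) = ((m:ℝ) ^ ((1:ℝ)/d))⁻¹ := by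
      rw [neg_div, Real.rpow_neg (le_of_lt hm0)]
    rw [hneg, ← div_eq_mul_inv, div_le_div_iff₀ hj0 hpowpos]
    have h4 : 2 * r * ((m:ℝ) ^ ((1:ℝ)/d)) ≤ 2 * r * (2 * (j:ℝ)) :=
      mul_le_mul_of_nonneg_left hmpow (by linarith)
    nlinarith

theorem uc_main (d N c : ℕ) (hd : 1 ≤ d) (hc : 1 ≤ c)
    (x : Fin N → Fin d → ℝ) (r : ℝ) (hr0 : 0 ≤ r) (hxr : ∀ i, ‖x i‖ ≤ r) :
    ∀ m : ℕ, ∀ S : Finset (Fin N), S.card = c * m →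
    ∃ C : Fin m → Finset (Fin N),
      (∀ k l, k ≠ l → Disjoint (C k) (C l)) ∧
      (∀ i ∈ S, ∃ k, i ∈ C k) ∧
      (∀ k, (C k).card = c) ∧
      (∀ k, C k ⊆ S) ∧
      (∀ k : Fin m, ∀ i ∈ C k, ∀ i' ∈ C k,
        dist (x i) (x i') ≤ 4 * r * (((k:ℕ) + 1 : ℝ)) ^ (-(1:ℝ)/d)) := by
  intro m
  induction m with
  | zero =>
      intro S hS
      refine ⟨Fin.elim0, fun k => k.elim0, ?_, fun k => k.elim0, fun k => k.elim0,
        fun k => k.elim0⟩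
      intro i hi
      exfalso
      have : S = ∅ := Finset.card_eq_zero.mp (by omega)
      simp [this] at hi
  | succ m ih =>
      intro S hS
      obtain ⟨T, hTS, hTc, hTd⟩ := uc_extract d N c (m+1) hd hc (by omega) x r hr0 hxr S
        (by omega)
      set S' := S \ T with hS'
      have hS'c : S'.card = c * m := by
        rw [hS', Finset.card_sdiff_of_subset hTS, hS, hTc]
        ring_nf
        omega
      obtain ⟨C', hdisj, hmem, hcard, hsub, hdist⟩ := ih S' hS'c
      refine ⟨Fin.snoc C' T, ?_, ?_, ?_, ?_, ?_⟩
      · intro k l hkl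
        induction k using Fin.lastCases with
        | last =>
            induction l using Fin.lastCases with
            | last => exact absurd rfl hkl
            | cast l =>
                simp only [Fin.snoc_last, Fin.snoc_castSucc]
                exact (Finset.disjoint_left.mpr (fun a haC haT =>
                  (Finset.mem_sdiff.mp (hsub l haC)).2 haT)).symm
        | cast k =>
            induction l using Fin.lastCases with
            | last =>
                simp only [Fin.snoc_last, Fin.snoc_castSucc]
                exact Finset.disjoint_left.mpr (fun a haC haT =>
                  (Finset.mem_sdiff.mp (hsub k haC)).2 haT)
            | cast l =>
                simp only [Fin.snoc_castSucc]
                exact hdisj k l (fun h => hkl (by rw [h]))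
      · intro i hi
        by_cases hiT : i ∈ T
        · exact ⟨Fin.last m, by simpa [Fin.snoc_last] using hiT⟩
        · obtain ⟨k, hk⟩ := hmem i (Finset.mem_sdiff.mpr ⟨hi, hiT⟩)
          exact ⟨Fin.castSucc k, by simpa [Fin.snoc_castSucc] using hk⟩
      · intro k
        induction k using Fin.lastCases with
        | last => simpa [Fin.snoc_last] using hTc
        | cast k => simpa [Fin.snoc_castSucc] using hcard k
      · intro k
        induction k using Fin.lastCases with
        | last => simpa [Fin.snoc_last] using hTS
        | cast k =>
            simp only [Fin.snoc_castSucc]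
            exact (hsub k).trans (Finset.sdiff_subset)
      · intro k
        induction k using Fin.lastCases with
        | last =>
            simp only [Fin.snoc_last, Fin.val_last]
            intro i hi i' hi'
            have := hTd i hi i' hi'
            convert this using 3
            push_cast
            ring
        | cast k =>
            simp only [Fin.snoc_castSucc, Fin.coe_castSucc]
            exact hdist k

theorem uniform_classification (d c n N : ℕ) (hd : 1 ≤ d) (hc : 1 ≤ c) (hn : 1 ≤ n)
    (hN : N = c * n) (x : Fin N → (Fin d → ℝ)) (r : ℝ) (hr : r = ⨆ i, ‖x i‖) :
    ∃ C : Fin n → Finset (Fin N),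
      (∀ k l : Fin n, k ≠ l → Disjoint (C k) (C l)) ∧
      (∀ i : Fin N, ∃ k, i ∈ C k) ∧
      (∀ k, (C k).card = c) ∧
      (∀ k : Fin n,
        Metric.diam (x '' (C k : Set (Fin N))) ≤ 4 * r * (((k : ℕ) + 1 : ℝ)) ^ (-(1 : ℝ) / d)) := by
  have hN1 : 1 ≤ N := by
    rw [hN]; exact Nat.one_le_iff_ne_zero.mpr (by positivity)
  have hne : Nonempty (Fin N) := ⟨⟨0, by omega⟩⟩
  have hbdd : BddAbove (Set.range fun i => ‖x i‖) := Set.Finite.bddAbove (Set.finite_range _)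
  have hxr : ∀ i, ‖x i‖ ≤ r := by
    intro i
    rw [hr]
    exact le_ciSup hbdd i
  have hr0 : 0 ≤ r := le_trans (norm_nonneg _) (hxr (Classical.arbitrary _))
  obtain ⟨C, hdisj, hmem, hcard, _, hdist⟩ :=
    uc_main d N c hd hc x r hr0 hxr n Finset.univ (by simp [hN])
  refine ⟨C, hdisj, fun i => hmem i (Finset.mem_univ i), hcard, ?_⟩
  intro k
  apply Metric.diam_le_of_forall_dist_le (by positivity)
  rintro p ⟨i, hi, rfl⟩ q ⟨i', hi', rfl⟩
  exact hdist k i (by simpa using hi) i' (by simpa using hi')
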